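/- Let A_conv(t) = (1/48)(12π(t² - 1) + t(48 - 6π²) + π³) and A_K(t) = (t²/2)(arcsin(1-δ(t)) + (1/2)sin(2 arcsin(1-δ(t)))) with δ(t) = (π/2-1)/t. Then lim_{t→∞} A_conv(t)/A_K(t) = 1; equivalently the Jaccard distance 1 - A_conv(t)/A_K(t) tends to 0 as t → ∞. -/

import Mathlib

open Real Filter

lemma stmt4_ratio :
    Tendsto (fun t : ℝ =>
        ((1 / 48) * (12 * π * (t ^ 2 - 1) + t * (48 - 6 * π ^ 2) + π ^ 3)) /
          (t ^ 2 / 2 * (Real.arcsin (1 - (π / 2 - 1) / t)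
            + 1 / 2 * Real.sin (2 * Real.arcsin (1 - (π / 2 - 1) / t)))))
      atTop (nhds 1) := by
  have hpos : ∀ᶠ t : ℝ in atTop, 0 < t := eventually_gt_atTop 0
  -- numerator / t^2 → π/4
  have hnum : Tendsto (fun t : ℝ =>
      ((1 / 48) * (12 * π * (t ^ 2 - 1) + t * (48 - 6 * π ^ 2) + π ^ 3)) / t ^ 2)
      atTop (nhds (π / 4)) := by
    have h : Tendsto (fun t : ℝ =>
        π / 4 + (1 - π ^ 2 / 8) * t⁻¹ + ((π ^ 3 - 12 * π) / 48) * t⁻¹ ^ 2)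
        atTop (nhds (π / 4 + (1 - π ^ 2 / 8) * 0 + ((π ^ 3 - 12 * π) / 48) * 0 ^ 2)) := by
      exact ((tendsto_const_nhds.add
        (tendsto_const_nhds.mul tendsto_inv_atTop_zero)).add
        (tendsto_const_nhds.mul (tendsto_inv_atTop_zero.pow 2)))
    simp only [mul_zero, add_zero, zero_pow, ne_eq, OfNat.ofNat_ne_zero,
      not_false_eq_true] at h
    refine h.congr' ?_
    filter_upwards [hpos] with t ht
    have ht' : t ≠ 0 := ne_of_gt ht
    field_simp
    ring
  -- denominator / t^2 → π/4
  have hδ : Tendsto (fun t : ℝ => (π / 2 - 1) / t) atTop (nhds 0) :=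
    tendsto_const_nhds.div_atTop tendsto_id
  have h2 : Tendsto (fun t : ℝ => 1 - (π / 2 - 1) / t) atTop (nhds 1) := by
    simpa using tendsto_const_nhds.sub hδ
  have h3 : Tendsto (fun t : ℝ => Real.arcsin (1 - (π / 2 - 1) / t)) atTop (nhds (π / 2)) := by
    have := (Real.continuous_arcsin.tendsto 1).comp h2
    simpa [Function.comp_def, Real.arcsin_one] using this
  have h4 : Tendsto (fun t : ℝ => Real.sin (2 * Real.arcsin (1 - (π / 2 - 1) / t)))
      atTop (nhds 0) := by
    have hm : Tendsto (fun t : ℝ => 2 * Real.arcsin (1 - (π / 2 - 1) / t))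
        atTop (nhds π) := by
      have hh := tendsto_const_nhds.mul h3 (f := fun _ : ℝ => (2 : ℝ))
      rw [show (2 : ℝ) * (π / 2) = π by ring] at hh
      exact hh
    have := (Real.continuous_sin.tendsto π).comp hm
    simpa [Function.comp_def, Real.sin_pi] using this
  have hinner : Tendsto (fun t : ℝ => Real.arcsin (1 - (π / 2 - 1) / t)
      + 1 / 2 * Real.sin (2 * Real.arcsin (1 - (π / 2 - 1) / t))) atTop (nhds (π / 2)) := by
    have := h3.add ((tendsto_const_nhds (x := (1 / 2 : ℝ))).mul h4)
    simpa using this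
  have hden : Tendsto (fun t : ℝ =>
      (t ^ 2 / 2 * (Real.arcsin (1 - (π / 2 - 1) / t)
        + 1 / 2 * Real.sin (2 * Real.arcsin (1 - (π / 2 - 1) / t)))) / t ^ 2)
      atTop (nhds (π / 4)) := by
    have h : Tendsto (fun t : ℝ => (Real.arcsin (1 - (π / 2 - 1) / t)
        + 1 / 2 * Real.sin (2 * Real.arcsin (1 - (π / 2 - 1) / t))) / 2)
        atTop (nhds (π / 2 / 2)) := hinner.div_const 2
    have h' : Tendsto (fun t : ℝ => (Real.arcsin (1 - (π / 2 - 1) / t)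
        + 1 / 2 * Real.sin (2 * Real.arcsin (1 - (π / 2 - 1) / t))) / 2)
        atTop (nhds (π / 4)) := by
      convert h using 2; ring
    refine h'.congr' ?_
    filter_upwards [hpos] with t ht
    have ht' : (t : ℝ) ^ 2 ≠ 0 := pow_ne_zero 2 (ne_of_gt ht)
    field_simp
  have hπ : (π / 4 : ℝ) ≠ 0 := by positivity
  have := hnum.div hden hπ
  rw [div_self hπ] at this
  refine this.congr' ?_
  filter_upwards [hpos] with t ht
  have ht' : (t : ℝ) ^ 2 ≠ 0 := pow_ne_zero 2 (ne_of_gt ht)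
  simp only [Pi.div_apply]
  rw [div_div_div_cancel_right₀ ht']

/-- the area ratio A_conv(t)/A_K(t) tends to 1 as t → ∞, equivalently
the Jaccard distance 1 - A_conv(t)/A_K(t) tends to 0. -/
theorem stmt4 :
    Tendsto (fun t : ℝ =>
        ((1 / 48) * (12 * π * (t ^ 2 - 1) + t * (48 - 6 * π ^ 2) + π ^ 3)) /
          (t ^ 2 / 2 * (Real.arcsin (1 - (π / 2 - 1) / t)
            + 1 / 2 * Real.sin (2 * Real.arcsin (1 - (π / 2 - 1) / t)))))
      atTop (nhds 1)
    ∧ Tendsto (fun t : ℝ =>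
        1 - ((1 / 48) * (12 * π * (t ^ 2 - 1) + t * (48 - 6 * π ^ 2) + π ^ 3)) /
          (t ^ 2 / 2 * (Real.arcsin (1 - (π / 2 - 1) / t)
            + 1 / 2 * Real.sin (2 * Real.arcsin (1 - (π / 2 - 1) / t)))))
      atTop (nhds 0) := by
  refine ⟨stmt4_ratio, ?_⟩
  have h := (tendsto_const_nhds (x := (1 : ℝ)) (f := atTop)).sub stmt4_ratio
  simpa using h
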